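/- Edge-count corollary: let n be even, j ∈ ℕ with η := j/n ≤ 1/10, and A ⊆ binom([n], n/2). Then the number of ordered pairs (A,B) of n/2-subsets of [n] with |A Δ B| = 2j, A ∈ 𝒜 and B ∉ 𝒜 is at least (1/2)·η·μ(𝒜)(1-μ(𝒜))·d·binom(n, n/2), where d = binom(n/2, j)² and μ(𝒜) = |𝒜|/binom(n, n/2). -/

import Mathlib

open Finset
variable {α : Type*} [DecidableEq α] [Fintype α]

lemma exists_perm_pair (P Q P' Q' : Finset α)
    (h1 : (P \ Q).card = (P' \ Q').card) (h2 : (Q \ P).card = (Q' \ P').card)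
    (h3 : (P ∩ Q).card = (P' ∩ Q').card) :
    ∃ g : Equiv.Perm α, P.image g = P' ∧ Q.image g = Q' := by
  classical
  set f : α → Bool × Bool := fun a => (decide (a ∈ P'), decide (a ∈ Q')) with hf
  set f' : α → Bool × Bool := fun a => (decide (a ∈ P), decide (a ∈ Q)) with hf'
  have hP : P.card = P'.card := by
    have e1 : (P ∩ Q).card + (P \ Q).card = P.card := Finset.card_inter_add_card_sdiff P Q
    have e2 : (P' ∩ Q').card + (P' \ Q').card = P'.card := Finset.card_inter_add_card_sdiff P' Q'
    omega
  have hQ : Q.card = Q'.card := by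
    have e1 : (Q ∩ P).card + (Q \ P).card = Q.card := Finset.card_inter_add_card_sdiff Q P
    have e2 : (Q' ∩ P').card + (Q' \ P').card = Q'.card := Finset.card_inter_add_card_sdiff Q' P'
    rw [inter_comm] at e1 e2
    omega
  have hfib : ∀ b, Fintype.card {a // f a = b} = Fintype.card {a // f' a = b} := by
    intro b
    rcases b with ⟨b1, b2⟩
    simp only [Fintype.card_subtype, hf, hf', Prod.mk.injEq]
    match b1, b2 with
    | true, true =>
      have : ∀ (R S : Finset α), univ.filter (fun a => decide (a ∈ R) = true ∧ decide (a ∈ S) = true) = R ∩ S := by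
        intro R S; ext a; simp
      rw [this, this]; exact h3.symm
    | true, false =>
      have : ∀ (R S : Finset α), univ.filter (fun a => decide (a ∈ R) = true ∧ decide (a ∈ S) = false) = R \ S := by
        intro R S; ext a; simp
      rw [this, this]; exact h1.symm
    | false, true =>
      have : ∀ (R S : Finset α), univ.filter (fun a => decide (a ∈ R) = false ∧ decide (a ∈ S) = true) = S \ R := by
        intro R S; ext a; simp [And.comm]
      rw [this, this]; exact h2.symm
    | false, false =>
      have key : ∀ (R S : Finset α), univ.filter (fun a => decide (a ∈ R) = false ∧ decide (a ∈ S) = false) = (R ∪ S)ᶜ := by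
        intro R S; ext a; simp [not_or]
      rw [key, key, Finset.card_compl, Finset.card_compl]
      have e1 : (P \ Q).card + Q.card = (P ∪ Q).card := Finset.card_sdiff_add_card P Q
      have e2 : (P' \ Q').card + Q'.card = (P' ∪ Q').card := Finset.card_sdiff_add_card P' Q'
      omega
  obtain ⟨g, hg⟩ : ∃ g : Equiv.Perm α, ∀ a, f' (g a) = f a :=
    ⟨Equiv.ofFiberEquiv (fun b => Fintype.equivOfCardEq (hfib b)),
     fun a => Equiv.ofFiberEquiv_map _ a⟩
  have hgP : ∀ a, (g a ∈ P ↔ a ∈ P') := by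
    intro a
    have := (Prod.mk.injEq _ _ _ _ ▸ hg a : _)
    exact decide_eq_decide.mp (congrArg Prod.fst (hg a))
  have hgQ : ∀ a, (g a ∈ Q ↔ a ∈ Q') := by
    intro a
    exact decide_eq_decide.mp (congrArg Prod.snd (hg a))
  refine ⟨g.symm, ?_, ?_⟩
  · apply Finset.eq_of_subset_of_card_le
    · intro x hx
      obtain ⟨a, ha, rfl⟩ := Finset.mem_image.mp hx
      exact (hgP (g.symm a)).mp (by simpa using ha)
    · rw [Finset.card_image_of_injective _ g.symm.injective, hP]
  · apply Finset.eq_of_subset_of_card_le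
    · intro x hx
      obtain ⟨a, ha, rfl⟩ := Finset.mem_image.mp hx
      exact (hgQ (g.symm a)).mp (by simpa using ha)
    · rw [Finset.card_image_of_injective _ g.symm.injective, hQ]
variable {α : Type*} [DecidableEq α] [Fintype α]

/-- all fibers of g ↦ (P.image g, Q.image g) over the orbit have the same size -/
lemma card_perm_fiber (P Q A C : Finset α) (g₀ : Equiv.Perm α)
    (hA : P.image g₀ = A) (hC : Q.image g₀ = C) :
    ((univ : Finset (Equiv.Perm α)).filter (fun g : Equiv.Perm α => P.image ⇑g = A ∧ Q.image ⇑g = C)).card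
      = ((univ : Finset (Equiv.Perm α)).filter (fun g : Equiv.Perm α => P.image ⇑g = P ∧ Q.image ⇑g = Q)).card := by
  classical
  have himg : ∀ (R : Finset α) (u v : Equiv.Perm α), R.image ⇑(u * v) = (R.image v).image u := by
    intro R u v
    rw [Finset.image_image]
    rfl
  apply Finset.card_nbij' (i := fun g => g₀⁻¹ * g) (j := fun h => g₀ * h)
  · intro g hg
    simp only [Finset.mem_coe, mem_filter, mem_univ, true_and] at hg ⊢
    constructor
    · rw [himg, hg.1, ← hA, Finset.image_image]
      simp [Function.comp_def]
    · rw [himg, hg.2, ← hC, Finset.image_image]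
      simp [Function.comp_def]
  · intro h hh
    simp only [Finset.mem_coe, mem_filter, mem_univ, true_and] at hh ⊢
    constructor
    · rw [himg, hh.1, hA]
    · rw [himg, hh.2, hC]
  · intro g _; group
  · intro h _; group

/-- fibers over same-type pairs equal the stabilizer size -/
lemma fiber_card_const (P Q A C : Finset α)
    (hP : P.card = A.card) (hQ : Q.card = C.card) (hPQ : (P \ Q).card = (A \ C).card) :
    ((univ : Finset (Equiv.Perm α)).filter (fun g : Equiv.Perm α => P.image ⇑g = A ∧ Q.image ⇑g = C)).card
      = ((univ : Finset (Equiv.Perm α)).filter (fun g : Equiv.Perm α => P.image ⇑g = P ∧ Q.image ⇑g = Q)).card := by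
  have e1 : (P ∩ Q).card + (P \ Q).card = P.card := Finset.card_inter_add_card_sdiff P Q
  have e2 : (A ∩ C).card + (A \ C).card = A.card := Finset.card_inter_add_card_sdiff A C
  have e3 : (Q ∩ P).card + (Q \ P).card = Q.card := Finset.card_inter_add_card_sdiff Q P
  have e4 : (C ∩ A).card + (C \ A).card = C.card := Finset.card_inter_add_card_sdiff C A
  rw [inter_comm] at e3 e4
  obtain ⟨g₀, h1, h2⟩ := exists_perm_pair P Q A C hPQ (by omega) (by omega)
  exact card_perm_fiber P Q A C g₀ h1 h2
variable {α : Type*} [DecidableEq α] [Fintype α]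

/-- number of k-sets at "distance" m from a fixed k-set A is (k choose m)^2 when |α| = 2k -/
lemma card_dist_fiber (k m : ℕ) (hcard : Fintype.card α = k + k) (A : Finset α)
    (hA : A.card = k) :
    ((powersetCard k (univ : Finset α)).filter (fun C => (A \ C).card = m)).card
      = k.choose m * k.choose m := by
  classical
  have hAc : Aᶜ.card = k := by
    rw [Finset.card_compl, hA, hcard]; omega
  rw [show k.choose m * k.choose m = ((powersetCard m A) ×ˢ (powersetCard m Aᶜ)).card by
    rw [Finset.card_product, Finset.card_powersetCard, Finset.card_powersetCard, hA, hAc]]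
  apply Finset.card_nbij' (i := fun C => (A \ C, C \ A))
    (j := fun p => (A \ p.1) ∪ p.2)
  · intro C hC
    simp only [Finset.mem_coe, mem_filter, Finset.mem_powersetCard, mem_product] at hC ⊢
    obtain ⟨⟨_, hCk⟩, hm⟩ := hC
    have h1 : (A ∩ C).card + (A \ C).card = A.card := Finset.card_inter_add_card_sdiff A C
    have h2 : (C ∩ A).card + (C \ A).card = C.card := Finset.card_inter_add_card_sdiff C A
    rw [inter_comm] at h2
    refine ⟨⟨Finset.sdiff_subset, hm⟩, ⟨?_, by rw [hA] at h1; omega⟩⟩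
    · intro a ha
      simp only [Finset.mem_compl]
      exact (Finset.mem_sdiff.mp ha).2
  · intro p hp
    simp only [Finset.mem_coe, mem_product, Finset.mem_powersetCard, mem_filter] at hp ⊢
    obtain ⟨⟨hp1, hp1c⟩, hp2, hp2c⟩ := hp
    have hdisj : Disjoint (A \ p.1) p.2 := by
      apply Finset.disjoint_left.mpr
      intro a ha hb
      exact Finset.mem_compl.mp (hp2 hb) (Finset.mem_sdiff.mp ha).1
    have hsub : A \ ((A \ p.1) ∪ p.2) = p.1 := by
      ext a
      simp only [Finset.mem_sdiff, Finset.mem_union, not_or, not_and, not_not]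
      constructor
      · rintro ⟨ha, h1, _⟩; exact h1 ha
      · intro h1
        refine ⟨hp1 h1, fun _ => h1, fun hb => Finset.mem_compl.mp (hp2 hb) (hp1 h1)⟩
    constructor
    · refine ⟨Finset.subset_univ _, ?_⟩
      rw [Finset.card_union_of_disjoint hdisj, Finset.card_sdiff_of_subset hp1, hA, hp1c, hp2c]
      have := Finset.card_le_card hp1
      rw [hA] at this
      have hmk : m ≤ k := by
        calc m = p.1.card := hp1c.symm
        _ ≤ k := this
      omega
    · rw [hsub, hp1c]
  · intro C hC
    simp only [Finset.mem_coe, mem_filter, Finset.mem_powersetCard] at hC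
    ext a
    simp only [Finset.mem_union, Finset.mem_sdiff]
    constructor
    · rintro (⟨ha, h⟩ | ⟨h, _⟩)
      · by_contra hc; exact h ⟨ha, hc⟩
      · exact h
    · intro ha
      by_cases h : a ∈ A
      · left; exact ⟨h, fun hx => hx.2 ha⟩
      · right; exact ⟨ha, h⟩
  · intro p hp
    simp only [Finset.mem_coe, mem_product, Finset.mem_powersetCard] at hp
    obtain ⟨⟨hp1, hp1c⟩, hp2, hp2c⟩ := hp
    have h1 : A \ ((A \ p.1) ∪ p.2) = p.1 := by
      ext a
      simp only [Finset.mem_sdiff, Finset.mem_union, not_or, not_and, not_not]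
      constructor
      · rintro ⟨ha, h1, _⟩; exact h1 ha
      · intro h1
        refine ⟨hp1 h1, fun _ => h1, fun hb => Finset.mem_compl.mp (hp2 hb) (hp1 h1)⟩
    have h2 : ((A \ p.1) ∪ p.2) \ A = p.2 := by
      ext a
      simp only [Finset.mem_sdiff, Finset.mem_union]
      constructor
      · rintro ⟨h | h, hA'⟩
        · exact absurd h.1 hA'
        · exact h
      · intro h
        exact ⟨Or.inr h, fun hA' => Finset.mem_compl.mp (hp2 h) hA'⟩
    show (A \ ((A \ p.1) ∪ p.2), ((A \ p.1) ∪ p.2) \ A) = p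
    rw [h1, h2]

lemma card_dist_set (k m : ℕ) (hcard : Fintype.card α = k + k) :
    ((powersetCard k (univ : Finset α) ×ˢ powersetCard k univ).filter
      (fun p => (p.1 \ p.2).card = m)).card = (k+k).choose k * (k.choose m * k.choose m) := by
  classical
  set K := powersetCard k (univ : Finset α) with hK
  have hmem : ∀ p ∈ (K ×ˢ K).filter (fun p => (p.1 \ p.2).card = m), p.1 ∈ K := by
    intro p hp
    exact (Finset.mem_product.mp (Finset.mem_filter.mp hp).1).1
  rw [Finset.card_eq_sum_card_fiberwise hmem]
  have hterm : ∀ A ∈ K,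
      (((K ×ˢ K).filter (fun p => (p.1 \ p.2).card = m)).filter (fun p => p.1 = A)).card
        = k.choose m * k.choose m := by
    intro A hAK
    have hA : A.card = k := (Finset.mem_powersetCard.mp hAK).2
    rw [← card_dist_fiber k m hcard A hA]
    apply Finset.card_nbij' (i := fun p => p.2) (j := fun C => (A, C))
    · intro p hp
      simp only [Finset.mem_coe, mem_filter, mem_product] at hp ⊢
      obtain ⟨⟨⟨_, h2⟩, hm⟩, h1⟩ := hp
      subst h1
      exact ⟨h2, hm⟩
    · intro C hC
      simp only [Finset.mem_coe, mem_filter, mem_product] at hC ⊢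
      exact ⟨⟨⟨hAK, hC.1⟩, hC.2⟩, trivial⟩
    · intro p hp
      simp only [Finset.mem_coe, mem_filter] at hp
      rw [← hp.2]
    · intro C _
      rfl
  rw [Finset.sum_congr rfl hterm, Finset.sum_const, smul_eq_mul]
  congr 1
  rw [hK, Finset.card_powersetCard, Finset.card_univ, hcard]

lemma orbit_count (k r : ℕ) (hcard : Fintype.card α = k + k) (P Q : Finset α)
    (hP : P.card = k) (hQ : Q.card = k) (hPQ : (P \ Q).card = r) :
    ((univ : Finset (Equiv.Perm α)).filter
        (fun g : Equiv.Perm α => P.image ⇑g = P ∧ Q.image ⇑g = Q)).card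
      * ((k+k).choose k * (k.choose r * k.choose r)) = Fintype.card (Equiv.Perm α) := by
  classical
  set K := powersetCard k (univ : Finset α) with hK
  set D := (K ×ˢ K).filter (fun p => (p.1 \ p.2).card = r) with hD
  have hmap : ∀ g ∈ (univ : Finset (Equiv.Perm α)),
      (P.image ⇑g, Q.image ⇑g) ∈ D := by
    intro g _
    rw [hD]
    simp only [mem_filter, mem_product, hK, Finset.mem_powersetCard]
    refine ⟨⟨⟨Finset.subset_univ _, ?_⟩, ⟨Finset.subset_univ _, ?_⟩⟩, ?_⟩
    · rw [Finset.card_image_of_injective _ g.injective, hP]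
    · rw [Finset.card_image_of_injective _ g.injective, hQ]
    · rw [← Finset.image_sdiff _ _ g.injective, Finset.card_image_of_injective _ g.injective, hPQ]
  rw [← Finset.card_univ, Finset.card_eq_sum_card_fiberwise hmap]
  have hterm : ∀ p ∈ D,
      ((univ : Finset (Equiv.Perm α)).filter
        (fun g : Equiv.Perm α => (P.image ⇑g, Q.image ⇑g) = p)).card
      = ((univ : Finset (Equiv.Perm α)).filter
        (fun g : Equiv.Perm α => P.image ⇑g = P ∧ Q.image ⇑g = Q)).card := by
    intro p hp
    rw [hD] at hp
    simp only [mem_filter, mem_product, hK, Finset.mem_powersetCard] at hp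
    obtain ⟨⟨⟨_, h1⟩, _, h2⟩, h3⟩ := hp
    have : ∀ g : Equiv.Perm α,
        ((P.image ⇑g, Q.image ⇑g) = p) = (P.image ⇑g = p.1 ∧ Q.image ⇑g = p.2) := by
      intro g
      rw [Prod.ext_iff]
    simp only [this]
    exact fiber_card_const P Q p.1 p.2 (by omega) (by omega) (by omega)
  rw [Finset.sum_congr rfl hterm, Finset.sum_const, smul_eq_mul, hD,
    card_dist_set k r hcard, mul_comm]
variable {α : Type*} [DecidableEq α] [Fintype α]

lemma step_lemma (k j s s' x y : ℕ) (T W : Finset α)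
    (hcard : Fintype.card α = k + k)
    (hT : T.card = k) (hW : W.card = k) (hWT : (W \ T).card = s)
    (hxy : x + y + s = j + s')
    (hx1 : x ≤ j) (hx2 : x + s ≤ k) (hx3 : j ≤ x + s)
    (hy1 : y ≤ j) (hy2 : y + s ≤ k) (hy3 : j ≤ y + s) :
    ∃ W' : Finset α, W'.card = k ∧ (W \ W').card = j ∧ (W' \ W).card = j
      ∧ (W' \ T).card = s' := by
  classical
  have hWTc : (W ∩ T).card + s = k := by
    have := Finset.card_inter_add_card_sdiff W T
    rw [hWT, hW] at this; omega
  have hTW : (T \ W).card = s := by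
    rw [← Finset.card_sdiff_comm (hW.trans hT.symm), hWT]
  have hcompl : ((W ∪ T)ᶜ).card + s = k := by
    rw [Finset.card_compl, hcard]
    have h1 : (W ∪ T).card = W.card + (T \ W).card := by
      rw [← Finset.card_union_of_disjoint Finset.disjoint_sdiff, Finset.union_sdiff_self_eq_union]
    rw [h1, hW, hTW]
    have : k + s ≤ k + k := by omega
    omega
  obtain ⟨R1, hR1s, hR1c⟩ := Finset.exists_subset_card_eq (s := (W ∩ T)) (n := x) (by omega)
  obtain ⟨R2, hR2s, hR2c⟩ := Finset.exists_subset_card_eq (s := (W \ T)) (n := j - x) (by omega)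
  obtain ⟨A1, hA1s, hA1c⟩ := Finset.exists_subset_card_eq (s := (T \ W)) (n := j - y) (by omega)
  obtain ⟨A2, hA2s, hA2c⟩ := Finset.exists_subset_card_eq (s := ((W ∪ T)ᶜ)) (n := y) (by omega)
  -- membership facts
  have mR1 : ∀ a ∈ R1, a ∈ W ∧ a ∈ T := fun a ha => Finset.mem_inter.mp (hR1s ha)
  have mR2 : ∀ a ∈ R2, a ∈ W ∧ a ∉ T := fun a ha => Finset.mem_sdiff.mp (hR2s ha)
  have mA1 : ∀ a ∈ A1, a ∈ T ∧ a ∉ W := fun a ha => Finset.mem_sdiff.mp (hA1s ha)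
  have mA2 : ∀ a ∈ A2, a ∉ W ∧ a ∉ T := by
    intro a ha
    have := Finset.mem_compl.mp (hA2s ha)
    rw [Finset.mem_union] at this
    tauto
  set R : Finset α := R1 ∪ R2 with hR
  set Ad : Finset α := A1 ∪ A2 with hAd
  have hRW : R ⊆ W := by
    intro a ha
    rcases Finset.mem_union.mp ha with h | h
    · exact (mR1 a h).1
    · exact (mR2 a h).1
  have hRcard : R.card = j := by
    rw [hR, Finset.card_union_of_disjoint, hR1c, hR2c]
    · omega
    · apply Finset.disjoint_left.mpr
      intro a h1 h2
      exact (mR2 a h2).2 (mR1 a h1).2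
  have hAdW : ∀ a ∈ Ad, a ∉ W := by
    intro a ha
    rcases Finset.mem_union.mp ha with h | h
    · exact (mA1 a h).2
    · exact (mA2 a h).1
  have hAdcard : Ad.card = j := by
    rw [hAd, Finset.card_union_of_disjoint, hA1c, hA2c]
    · omega
    · apply Finset.disjoint_left.mpr
      intro a h1 h2
      exact (mA2 a h2).2 (mA1 a h1).1
  refine ⟨(W \ R) ∪ Ad, ?_, ?_, ?_, ?_⟩
  · rw [Finset.card_union_of_disjoint, Finset.card_sdiff_of_subset hRW, hW, hRcard, hAdcard]
    · omega
    · apply Finset.disjoint_left.mpr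
      intro a h1 h2
      exact hAdW a h2 (Finset.mem_sdiff.mp h1).1
  · have : W \ ((W \ R) ∪ Ad) = R := by
      ext a
      simp only [Finset.mem_sdiff, Finset.mem_union, not_or, not_and, not_not]
      constructor
      · rintro ⟨haW, h1, _⟩; exact h1 haW
      · intro haR
        exact ⟨hRW haR, fun _ => haR, fun h => absurd (hRW haR) (hAdW a h)⟩
    rw [this, hRcard]
  · have : ((W \ R) ∪ Ad) \ W = Ad := by
      ext a
      simp only [Finset.mem_sdiff, Finset.mem_union]
      constructor
      · rintro ⟨h | h, haW⟩
        · exact absurd h.1 haW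
        · exact h
      · intro h; exact ⟨Or.inr h, hAdW a h⟩
    rw [this, hAdcard]
  · have hsplit : ((W \ R) ∪ Ad) \ T = ((W \ T) \ R2) ∪ A2 := by
      ext a
      simp only [Finset.mem_sdiff, Finset.mem_union, hR, hAd]
      constructor
      · rintro ⟨⟨haW, hnR⟩ | hA, hnT⟩
        · rw [not_or] at hnR
          exact Or.inl ⟨⟨haW, hnT⟩, hnR.2⟩
        · rcases Finset.mem_union.mp (by exact Finset.mem_union.mpr hA) with h | h
          · exact absurd (mA1 a h).1 hnT
          · exact Or.inr h
      · rintro (⟨⟨haW, hnT⟩, hnR2⟩ | hA2')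
        · refine ⟨Or.inl ⟨haW, ?_⟩, hnT⟩
          rw [not_or]
          exact ⟨fun h => hnT (mR1 a h).2, hnR2⟩
        · exact ⟨Or.inr (Or.inr hA2'), (mA2 a hA2').2⟩
    rw [hsplit, Finset.card_union_of_disjoint, Finset.card_sdiff_of_subset hR2s, hWT, hR2c, hA2c]
    · omega
    · apply Finset.disjoint_left.mpr
      intro a h1 h2
      exact (mA2 a h2).1 (Finset.mem_sdiff.mp (Finset.mem_sdiff.mp h1).1).1
lemma path_lemma (k j : ℕ) (hj : 1 ≤ j) (hjk : 5*j ≤ k)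
    (hcard : Fintype.card α = k + k)
    (T : Finset α) (hT : T.card = k) (m : ℕ) (hm : m ≤ k) :
    ∃ (ℓ : ℕ) (W : ℕ → Finset α), W 0 = T ∧ (∀ i ≤ ℓ, (W i).card = k) ∧
      (∀ i < ℓ, ((W i) \ (W (i+1))).card = j ∧ ((W (i+1)) \ (W i)).card = j) ∧
      ((W ℓ \ T).card = m) ∧ j * ℓ ≤ m + 2 * j := by
  classical
  induction m using Nat.strong_induction_on with
  | _ m IH =>
  rcases Nat.lt_or_ge m 1 with hm0 | hm1
  · -- m = 0
    interval_cases m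
    exact ⟨0, fun _ => T, rfl, fun i _ => hT, fun i h => absurd h (Nat.not_lt_zero i),
      by simp, by omega⟩
  rcases Nat.lt_or_ge j m with hlt | hle
  · -- m > j : recurse on m - j
    obtain ⟨ℓ', W', hW0, hWc, hWs, hWd, hWl⟩ := IH (m - j) (by omega) (by omega)
    obtain ⟨Wn, hWn1, hWn2, hWn3, hWn4⟩ :=
      step_lemma k j (m - j) m j j T (W' ℓ') hcard hT (hWc ℓ' le_rfl) hWd
        (by omega) le_rfl (by omega) (by omega) le_rfl (by omega) (by omega)
    refine ⟨ℓ' + 1, fun i => if i ≤ ℓ' then W' i else Wn, by simpa using hW0, ?_, ?_, ?_, by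
      have : j * (ℓ' + 1) = j * ℓ' + j := by ring
      omega⟩
    · intro i hi
      by_cases h : i ≤ ℓ'
      · simpa [h] using hWc i h
      · simpa [h] using hWn1
    · intro i hi
      by_cases h : i < ℓ'
      · have h1 : i ≤ ℓ' := by omega
        have h2 : i + 1 ≤ ℓ' := by omega
        simpa [h1, h2] using hWs i h
      · have h1 : i = ℓ' := by omega
        subst h1
        have h2 : ¬ (i + 1 ≤ i) := by omega
        simpa [h2] using ⟨hWn2, hWn3⟩
    · have h2 : ¬ (ℓ' + 1 ≤ ℓ') := by omega
      simpa [h2] using hWn4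
  · -- 1 ≤ m ≤ j : two steps
    obtain ⟨W1, hW11, hW12, hW13, hW14⟩ :=
      step_lemma k j 0 j j j T T hcard hT hT (by simp)
        (by omega) le_rfl (by omega) (by omega) le_rfl (by omega) (by omega)
    obtain ⟨W2, hW21, hW22, hW23, hW24⟩ :=
      step_lemma k j j m m 0 T W1 hcard hT hW11 hW14
        (by omega) (by omega) (by omega) (by omega) (by omega) (by omega) (by omega)
    refine ⟨2, fun i => if i = 0 then T else if i = 1 then W1 else W2,
      rfl, ?_, ?_, by simpa using hW24, by omega⟩
    · intro i hi
      interval_cases i <;> simp [hT, hW11, hW21]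
    · intro i hi
      interval_cases i <;> simp [hW12, hW13, hW22, hW23]

lemma exists_crossing (P : ℕ → Prop) [DecidablePred P] (ℓ : ℕ) (h0 : P 0) (hl : ¬ P ℓ) :
    ∃ i, i < ℓ ∧ P i ∧ ¬ P (i+1) := by
  induction ℓ with
  | zero => exact absurd h0 hl
  | succ n ih =>
    by_cases h : P n
    · exact ⟨n, Nat.lt_succ_self n, h, hl⟩
    · obtain ⟨i, h1, h2⟩ := ih h
      exact ⟨i, h1.trans (Nat.lt_succ_self n), h2⟩

lemma card_symmDiff' {α : Type*} [DecidableEq α] (s t : Finset α) :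
    (symmDiff s t).card = (s \ t).card + (t \ s).card := by
  rw [symmDiff_def]
  exact Finset.card_union_of_disjoint disjoint_sdiff_sdiff

theorem johnson_edge_count (n j : ℕ) (hn : Even n) (hnpos : 0 < n)
    (hη : (j : ℝ) / n ≤ 1 / 10)
    (𝒜 : Finset (Finset (Fin n)))
    (h𝒜 : 𝒜 ⊆ Finset.powersetCard (n / 2) (Finset.univ : Finset (Fin n)))
    (μA : ℝ) (hμA : μA = (𝒜.card : ℝ) / (n.choose (n / 2))) :
    (1 / 2) * ((j : ℝ) / n) * μA * (1 - μA) * ((((n / 2).choose j) ^ 2 : ℕ) : ℝ)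
        * (n.choose (n / 2)) ≤
      ((((Finset.powersetCard (n / 2) (Finset.univ : Finset (Fin n))) ×ˢ
          (Finset.powersetCard (n / 2) (Finset.univ : Finset (Fin n)))).filter
        (fun p => (symmDiff p.1 p.2).card = 2 * j ∧ p.1 ∈ 𝒜 ∧ p.2 ∉ 𝒜)).card : ℝ) := by
  classical
  obtain ⟨k, hk⟩ := hn
  have hk2 : n / 2 = k := by omega
  have hnr : (0:ℝ) < n := by exact_mod_cast hnpos
  rw [hk2] at h𝒜 hμA ⊢
  set K := Finset.powersetCard k (Finset.univ : Finset (Fin n)) with hK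
  set E := ((K ×ˢ K).filter
      (fun p => (symmDiff p.1 p.2).card = 2 * j ∧ p.1 ∈ 𝒜 ∧ p.2 ∉ 𝒜)) with hE
  set N := n.choose k with hN
  have hcard : Fintype.card (Fin n) = k + k := by rw [Fintype.card_fin]; omega
  have hKcard : K.card = N := by
    rw [hK, Finset.card_powersetCard, Finset.card_univ, hcard, hN]
    congr 1
    omega
  have hNpos : 0 < N := by
    rw [hN]
    exact Nat.choose_pos (by omega)
  have hApos : 𝒜.card ≤ N := hKcard ▸ Finset.card_le_card h𝒜
  rcases Nat.eq_zero_or_pos j with rfl | hj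
  · have h0 : ((0:ℕ):ℝ) / n = 0 := by simp
    rw [h0]
    have : (1:ℝ) / 2 * 0 * μA * (1 - μA) * ((k.choose 0 ^ 2 : ℕ) : ℝ) * N = 0 := by ring
    rw [this]
    positivity
  -- j ≥ 1
  have hjn : 10 * j ≤ n := by
    rw [div_le_div_iff₀ hnr (by norm_num)] at hη
    have h10 : ((10 * j : ℕ) : ℝ) ≤ (n:ℝ) := by push_cast; linarith
    exact_mod_cast h10
  have hjk : 5 * j ≤ k := by omega
  set d := k.choose j * k.choose j with hd
  set Cross := (K ×ˢ K).filter (fun p => p.1 ∈ 𝒜 ∧ p.2 ∉ 𝒜) with hCross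
  set Cm := fun m => Cross.filter (fun p => (p.1 \ p.2).card = m) with hCm
  have hCrossCard : Cross.card = 𝒜.card * (N - 𝒜.card) := by
    have hprod : Cross = 𝒜 ×ˢ (K \ 𝒜) := by
      ext p
      simp only [hCross, mem_filter, mem_product, Finset.mem_sdiff]
      constructor
      · rintro ⟨⟨h1, h2⟩, h3, h4⟩; exact ⟨h3, h2, h4⟩
      · rintro ⟨h1, h2, h3⟩; exact ⟨⟨h𝒜 h1, h2⟩, h1, h3⟩
    rw [hprod, Finset.card_product, Finset.card_sdiff_of_subset h𝒜, hKcard]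
  have hfibers : ∀ p ∈ Cross, (p.1 \ p.2).card ∈ Finset.Icc 1 k := by
    intro p hp
    simp only [hCross, mem_filter, mem_product] at hp
    obtain ⟨⟨h1, h2⟩, h3, h4⟩ := hp
    have hc1 : p.1.card = k := (Finset.mem_powersetCard.mp h1).2
    have hc2 : p.2.card = k := (Finset.mem_powersetCard.mp h2).2
    simp only [Finset.mem_Icc]
    refine ⟨?_, le_trans (Finset.card_le_card Finset.sdiff_subset) (le_of_eq hc1)⟩
    by_contra h
    push_neg at h
    have h0 : (p.1 \ p.2).card = 0 := by omega
    have hsub : p.1 ⊆ p.2 := by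
      rw [← Finset.sdiff_eq_empty_iff_subset]
      exact Finset.card_eq_zero.mp h0
    have : p.1 = p.2 := Finset.eq_of_subset_of_card_le hsub (by omega)
    exact h4 (this ▸ h3)
  have hdecomp : Cross.card = ∑ m ∈ Finset.Icc 1 k, (Cm m).card :=
    Finset.card_eq_sum_card_fiberwise hfibers
  have hNNpos : 0 < (k+k).choose k := Nat.choose_pos (by omega)
  have hdpos : 0 < d := Nat.mul_pos (Nat.choose_pos (by omega)) (Nat.choose_pos (by omega))
  have perm_bound : ∀ m ∈ Finset.Icc 1 k,
      j * (d * (Cm m).card) ≤ (k + 2*j) * (E.card * (k.choose m * k.choose m)) := by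
    intro m hm
    simp only [Finset.mem_Icc] at hm
    obtain ⟨T, hTsub, hTc⟩ := Finset.exists_subset_card_eq (s := (univ : Finset (Fin n))) (n := k)
      (by rw [Finset.card_univ, hcard]; omega)
    obtain ⟨ℓ, W, hW0, hWc, hWs, hWd, hWl⟩ := path_lemma k j hj hjk hcard T hTc m hm.2
    have hl1 : 1 ≤ ℓ := by
      by_contra h
      have hl0 : ℓ = 0 := by omega
      rw [hl0, hW0, Finset.sdiff_self, Finset.card_empty] at hWd
      omega
    have hP0c : (W 0).card = k := hWc 0 (by omega)
    have hPlc : (W ℓ).card = k := hWc ℓ le_rfl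
    have hP0Pl : (W 0 \ W ℓ).card = m := by
      rw [hW0, ← Finset.card_sdiff_comm (hPlc.trans hTc.symm), hWd]
    set σ := ((univ : Finset (Equiv.Perm (Fin n))).filter
        (fun g : Equiv.Perm (Fin n) => (W 0).image ⇑g = W 0 ∧ (W ℓ).image ⇑g = W ℓ)).card with hσdef
    have hσ : σ * ((k+k).choose k * (k.choose m * k.choose m)) = Fintype.card (Equiv.Perm (Fin n)) :=
      orbit_count k m hcard (W 0) (W ℓ) hP0c hPlc hP0Pl
    set τ := fun i => ((univ : Finset (Equiv.Perm (Fin n))).filter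
        (fun g : Equiv.Perm (Fin n) => (W i).image ⇑g = W i ∧ (W (i+1)).image ⇑g = W (i+1))).card with hτdef
    have hτeq : ∀ i, i < ℓ → (τ i) * ((k+k).choose k * d) = Fintype.card (Equiv.Perm (Fin n)) := by
      intro i hi
      exact orbit_count k j hcard (W i) (W (i+1)) (hWc i (by omega)) (hWc (i+1) (by omega)) (hWs i hi).1
    have hττ : ∀ i, i < ℓ → τ i = τ 0 := by
      intro i hi
      have h1 := hτeq i hi
      have h2 := hτeq 0 (by omega)
      have hpos : 0 < (k+k).choose k * d := Nat.mul_pos hNNpos hdpos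
      exact Nat.eq_of_mul_eq_mul_right hpos (h1.trans h2.symm)
    set Gm := (univ : Finset (Equiv.Perm (Fin n))).filter
        (fun g : Equiv.Perm (Fin n) => (W 0).image ⇑g ∈ 𝒜 ∧ (W ℓ).image ⇑g ∉ 𝒜) with hGmdef
    have hGmCm : Gm.card = (Cm m).card * σ := by
      have hmap : ∀ g ∈ Gm, ((W 0).image ⇑g, (W ℓ).image ⇑g) ∈ Cm m := by
        intro g hg
        simp only [hGmdef, mem_filter, mem_univ, true_and] at hg
        simp only [hCm, hCross, mem_filter, mem_product, hK, Finset.mem_powersetCard]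
        refine ⟨⟨⟨⟨Finset.subset_univ _, ?_⟩, Finset.subset_univ _, ?_⟩, hg.1, hg.2⟩, ?_⟩
        · rw [Finset.card_image_of_injective _ g.injective, hP0c]
        · rw [Finset.card_image_of_injective _ g.injective, hPlc]
        · rw [← Finset.image_sdiff _ _ g.injective,
            Finset.card_image_of_injective _ g.injective, hP0Pl]
      rw [Finset.card_eq_sum_card_fiberwise hmap]
      have hterm : ∀ p ∈ Cm m,
          (Gm.filter (fun g : Equiv.Perm (Fin n) => ((W 0).image ⇑g, (W ℓ).image ⇑g) = p)).card = σ := by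
        intro p hp
        simp only [hCm, hCross, mem_filter, mem_product, hK, Finset.mem_powersetCard] at hp
        obtain ⟨⟨⟨⟨_, hp1⟩, _, hp2⟩, hp3, hp4⟩, hp5⟩ := hp
        have heq : Gm.filter (fun g : Equiv.Perm (Fin n) => ((W 0).image ⇑g, (W ℓ).image ⇑g) = p)
            = (univ : Finset (Equiv.Perm (Fin n))).filter
              (fun g : Equiv.Perm (Fin n) => (W 0).image ⇑g = p.1 ∧ (W ℓ).image ⇑g = p.2) := by
          ext g
          simp only [hGmdef, Finset.filter_filter, mem_filter, mem_univ, true_and, Prod.ext_iff]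
          constructor
          · rintro ⟨_, h1, h2⟩; exact ⟨h1, h2⟩
          · rintro ⟨h1, h2⟩
            exact ⟨⟨by rw [h1]; exact hp3, by rw [h2]; exact hp4⟩, h1, h2⟩
        rw [heq, hσdef]
        exact fiber_card_const (W 0) (W ℓ) p.1 p.2 (by rw [hP0c, hp1])
          (by rw [hPlc, hp2]) (by rw [hP0Pl, hp5])
      rw [Finset.sum_congr rfl hterm, Finset.sum_const, smul_eq_mul]
    have hGi : ∀ i, i < ℓ → ((univ : Finset (Equiv.Perm (Fin n))).filter
        (fun g : Equiv.Perm (Fin n) => ((W i).image ⇑g, (W (i+1)).image ⇑g) ∈ E)).card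
          ≤ E.card * τ i := by
      intro i hi
      have hmap : ∀ g ∈ (univ : Finset (Equiv.Perm (Fin n))).filter
          (fun g : Equiv.Perm (Fin n) => ((W i).image ⇑g, (W (i+1)).image ⇑g) ∈ E),
          ((W i).image ⇑g, (W (i+1)).image ⇑g) ∈ E := fun g hg => (Finset.mem_filter.mp hg).2
      rw [Finset.card_eq_sum_card_fiberwise hmap]
      have hterm : ∀ e ∈ E,
          (((univ : Finset (Equiv.Perm (Fin n))).filter
            (fun g : Equiv.Perm (Fin n) => ((W i).image ⇑g, (W (i+1)).image ⇑g) ∈ E)).filter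
              (fun g : Equiv.Perm (Fin n) => ((W i).image ⇑g, (W (i+1)).image ⇑g) = e)).card ≤ τ i := by
        intro e he
        simp only [hE, mem_filter, mem_product, hK, Finset.mem_powersetCard] at he
        obtain ⟨⟨⟨_, he1⟩, _, he2⟩, he3, _⟩ := he
        have hee : (e.1 \ e.2).card = j := by
          have h1 := card_symmDiff' e.1 e.2
          have h2 : (e.1 \ e.2).card = (e.2 \ e.1).card :=
            Finset.card_sdiff_comm (he1.trans he2.symm)
          omega
        calc (((univ : Finset (Equiv.Perm (Fin n))).filter
            (fun g : Equiv.Perm (Fin n) => ((W i).image ⇑g, (W (i+1)).image ⇑g) ∈ E)).filter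
              (fun g : Equiv.Perm (Fin n) => ((W i).image ⇑g, (W (i+1)).image ⇑g) = e)).card
            ≤ ((univ : Finset (Equiv.Perm (Fin n))).filter
              (fun g : Equiv.Perm (Fin n) => (W i).image ⇑g = e.1 ∧ (W (i+1)).image ⇑g = e.2)).card := by
              apply Finset.card_le_card
              intro g hg
              simp only [mem_filter, mem_univ, true_and, Prod.ext_iff] at hg ⊢
              exact hg.2
          _ = τ i := by
              rw [hτdef]
              exact fiber_card_const (W i) (W (i+1)) e.1 e.2
                (by rw [hWc i (by omega), he1]) (by rw [hWc (i+1) (by omega), he2])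
                (by rw [(hWs i hi).1, hee])
      calc (∑ e ∈ E, (((univ : Finset (Equiv.Perm (Fin n))).filter
            (fun g : Equiv.Perm (Fin n) => ((W i).image ⇑g, (W (i+1)).image ⇑g) ∈ E)).filter
              (fun g : Equiv.Perm (Fin n) => ((W i).image ⇑g, (W (i+1)).image ⇑g) = e)).card)
          ≤ ∑ e ∈ E, τ i := Finset.sum_le_sum hterm
        _ = E.card * τ i := by rw [Finset.sum_const, smul_eq_mul]
    have hsubset : Gm ⊆ (Finset.range ℓ).biUnion (fun i =>
        (univ : Finset (Equiv.Perm (Fin n))).filter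
          (fun g : Equiv.Perm (Fin n) => ((W i).image ⇑g, (W (i+1)).image ⇑g) ∈ E)) := by
      intro g hg
      simp only [hGmdef, mem_filter, mem_univ, true_and] at hg
      obtain ⟨i, hi, hcross1, hcross2⟩ :=
        exists_crossing (fun i => (W i).image ⇑g ∈ 𝒜) ℓ hg.1 hg.2
      apply Finset.mem_biUnion.mpr
      refine ⟨i, Finset.mem_range.mpr hi, ?_⟩
      simp only [mem_filter, mem_univ, true_and, hE, mem_product, hK, Finset.mem_powersetCard]
      refine ⟨⟨⟨Finset.subset_univ _, ?_⟩, Finset.subset_univ _, ?_⟩, ?_, hcross1, hcross2⟩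
      · rw [Finset.card_image_of_injective _ g.injective, hWc i (by omega)]
      · rw [Finset.card_image_of_injective _ g.injective, hWc (i+1) (by omega)]
      · rw [card_symmDiff', ← Finset.image_sdiff _ _ g.injective,
          ← Finset.image_sdiff _ _ g.injective,
          Finset.card_image_of_injective _ g.injective,
          Finset.card_image_of_injective _ g.injective,
          (hWs i hi).1, (hWs i hi).2]
        omega
    have hchain : (Cm m).card * σ ≤ ℓ * (E.card * τ 0) := by
      rw [← hGmCm]
      calc Gm.card ≤ ((Finset.range ℓ).biUnion (fun i =>
            (univ : Finset (Equiv.Perm (Fin n))).filter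
              (fun g : Equiv.Perm (Fin n) => ((W i).image ⇑g, (W (i+1)).image ⇑g) ∈ E))).card :=
            Finset.card_le_card hsubset
        _ ≤ ∑ i ∈ Finset.range ℓ, ((univ : Finset (Equiv.Perm (Fin n))).filter
              (fun g : Equiv.Perm (Fin n) => ((W i).image ⇑g, (W (i+1)).image ⇑g) ∈ E)).card :=
            Finset.card_biUnion_le
        _ ≤ ∑ i ∈ Finset.range ℓ, E.card * τ 0 := by
            apply Finset.sum_le_sum
            intro i hi
            have hilt := Finset.mem_range.mp hi
            calc ((univ : Finset (Equiv.Perm (Fin n))).filter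
                (fun g : Equiv.Perm (Fin n) => ((W i).image ⇑g, (W (i+1)).image ⇑g) ∈ E)).card
                ≤ E.card * τ i := hGi i hilt
              _ = E.card * τ 0 := by rw [hττ i hilt]
        _ = ℓ * (E.card * τ 0) := by rw [Finset.sum_const, Finset.card_range, smul_eq_mul]
    have hcp : 0 < Fintype.card (Equiv.Perm (Fin n)) := Fintype.card_pos
    have big : ((Cm m).card * ((k+k).choose k * d)) * Fintype.card (Equiv.Perm (Fin n))
        ≤ (ℓ * (E.card * ((k+k).choose k * (k.choose m * k.choose m))))
          * Fintype.card (Equiv.Perm (Fin n)) := by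
      calc ((Cm m).card * ((k+k).choose k * d)) * Fintype.card (Equiv.Perm (Fin n))
          = ((Cm m).card * σ) * (((k+k).choose k * (k.choose m * k.choose m)) * ((k+k).choose k * d)) := by
            rw [← hσ]; ring
        _ ≤ (ℓ * (E.card * τ 0)) * (((k+k).choose k * (k.choose m * k.choose m)) * ((k+k).choose k * d)) :=
            Nat.mul_le_mul hchain le_rfl
        _ = (ℓ * (E.card * ((k+k).choose k * (k.choose m * k.choose m)))) * (τ 0 * ((k+k).choose k * d)) := by
            ring
        _ = _ := by rw [hτeq 0 (by omega)]
    have med : (Cm m).card * ((k+k).choose k * d)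
        ≤ ℓ * (E.card * ((k+k).choose k * (k.choose m * k.choose m))) :=
      Nat.le_of_mul_le_mul_right big hcp
    have fin1 : (Cm m).card * d ≤ ℓ * (E.card * (k.choose m * k.choose m)) := by
      have med2 : (k+k).choose k * ((Cm m).card * d)
          ≤ (k+k).choose k * (ℓ * (E.card * (k.choose m * k.choose m))) := by
        calc (k+k).choose k * ((Cm m).card * d) = (Cm m).card * ((k+k).choose k * d) := by ring
          _ ≤ ℓ * (E.card * ((k+k).choose k * (k.choose m * k.choose m))) := med
          _ = (k+k).choose k * (ℓ * (E.card * (k.choose m * k.choose m))) := by ring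
      exact Nat.le_of_mul_le_mul_left med2 hNNpos
    calc j * (d * (Cm m).card) = j * ((Cm m).card * d) := by ring
      _ ≤ j * (ℓ * (E.card * (k.choose m * k.choose m))) := Nat.mul_le_mul le_rfl fin1
      _ = (j * ℓ) * (E.card * (k.choose m * k.choose m)) := by ring
      _ ≤ (k + 2*j) * (E.card * (k.choose m * k.choose m)) := by
          apply Nat.mul_le_mul _ le_rfl
          omega
  have hc2sum : (∑ m ∈ Finset.Icc 1 k, k.choose m * k.choose m) ≤ N := by
    have hNN : N = (k+k).choose k := by rw [hN, hk]
    have htot : ∀ p ∈ K ×ˢ K, (p.1 \ p.2).card ∈ Finset.Icc 0 k := by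
      intro p hp
      simp only [mem_product, hK, Finset.mem_powersetCard] at hp
      simp only [Finset.mem_Icc]
      exact ⟨Nat.zero_le _,
        le_trans (Finset.card_le_card Finset.sdiff_subset) (le_of_eq hp.1.2)⟩
    have heq := Finset.card_eq_sum_card_fiberwise htot
    have hKK : (K ×ˢ K).card = N * N := by rw [Finset.card_product, hKcard]
    have hterm : ∀ m ∈ Finset.Icc 0 k,
        ((K ×ˢ K).filter (fun p => (p.1 \ p.2).card = m)).card
          = (k+k).choose k * (k.choose m * k.choose m) := by
      intro m _
      rw [hK]
      exact card_dist_set k m hcard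
    have h2 : (∑ m ∈ Finset.Icc 0 k, (k+k).choose k * (k.choose m * k.choose m)) = N * N := by
      rw [← Finset.sum_congr rfl hterm, ← heq, hKK]
    have h4 : N * (∑ m ∈ Finset.Icc 1 k, k.choose m * k.choose m) ≤ N * N := by
      calc N * (∑ m ∈ Finset.Icc 1 k, k.choose m * k.choose m)
          = ∑ m ∈ Finset.Icc 1 k, (k+k).choose k * (k.choose m * k.choose m) := by
            rw [Finset.mul_sum]
            exact Finset.sum_congr rfl (fun m _ => by rw [← hNN])
        _ ≤ ∑ m ∈ Finset.Icc 0 k, (k+k).choose k * (k.choose m * k.choose m) :=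
            Finset.sum_le_sum_of_subset (Finset.Icc_subset_Icc (by omega) le_rfl)
        _ = N * N := h2
    exact Nat.le_of_mul_le_mul_left h4 hNpos
  have hsum : j * (d * Cross.card) ≤ (2*n) * (E.card * N) := by
    calc j * (d * Cross.card) = ∑ m ∈ Finset.Icc 1 k, j * (d * (Cm m).card) := by
          rw [hdecomp, Finset.mul_sum, Finset.mul_sum]
      _ ≤ ∑ m ∈ Finset.Icc 1 k, (k + 2*j) * (E.card * (k.choose m * k.choose m)) :=
          Finset.sum_le_sum perm_bound
      _ = (k + 2*j) * (E.card * (∑ m ∈ Finset.Icc 1 k, k.choose m * k.choose m)) := by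
          rw [Finset.mul_sum, Finset.mul_sum]
      _ ≤ (k + 2*j) * (E.card * N) :=
          Nat.mul_le_mul le_rfl (Nat.mul_le_mul le_rfl hc2sum)
      _ ≤ (2*n) * (E.card * N) := Nat.mul_le_mul (by omega) le_rfl
  -- final real computation
  rw [hμA]
  have hNr : (0:ℝ) < N := by exact_mod_cast hNpos
  have hsub2 : (1 : ℝ) - (𝒜.card : ℝ) / N = ((N - 𝒜.card : ℕ) : ℝ) / N := by
    rw [Nat.cast_sub hApos]
    field_simp
  rw [hsub2]
  have hkey : (j : ℝ) * (d * (𝒜.card * ((N - 𝒜.card : ℕ) : ℝ))) ≤ (2*n) * (E.card * N) := by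
    have h1 : j * (d * (𝒜.card * (N - 𝒜.card))) ≤ (2*n) * (E.card * N) := by
      rw [← hCrossCard]
      exact hsum
    exact_mod_cast h1
  have hgoal : (1:ℝ)/2 * ((j:ℝ)/n) * ((𝒜.card:ℝ)/N) * (((N - 𝒜.card:ℕ):ℝ)/N)
        * (((k.choose j ^ 2 : ℕ)):ℝ) * (N:ℝ)
      = ((j:ℝ) * ((d:ℝ) * ((𝒜.card:ℝ) * (((N - 𝒜.card : ℕ)):ℝ)))) / (2 * ((n:ℝ) * N)) := by
    rw [hd]
    push_cast
    field_simp
  rw [hgoal, div_le_iff₀ (by positivity)]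
  calc ((j:ℝ) * ((d:ℝ) * ((𝒜.card:ℝ) * (((N - 𝒜.card : ℕ)):ℝ))))
      ≤ (2*(n:ℝ)) * ((E.card:ℝ) * N) := hkey
    _ = (E.card:ℝ) * (2 * ((n:ℝ) * N)) := by ring
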